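/- Let Z be an n×n positive definite real matrix and ζ ∈ ℝⁿ such that the block matrix Z[ζ] = [[Z, ζ],[ζᵀ, 1]] is positive definite. Let w = Z⁻¹1 be the weighting of Z. Then the weighting w[ζ] := Z[ζ]⁻¹1 of Z[ζ] is given by w[ζ] = (w, 0)ᵀ + ((1 - ζᵀw)/(1 - ζᵀZ⁻¹ζ)) · (−Z⁻¹ζ, 1)ᵀ. -/

import Mathlib

open Matrix

/-- The bordered matrix `Z[ζ] = [[Z, ζ], [ζᵀ, 1]]`. -/
noncomputable def border {n : ℕ} (Z : Matrix (Fin n) (Fin n) ℝ) (ζ : Fin n → ℝ) :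
    Matrix (Fin n ⊕ Unit) (Fin n ⊕ Unit) ℝ :=
  Matrix.fromBlocks Z (Matrix.of fun i _ => ζ i) (Matrix.of fun _ j => ζ j)
    (Matrix.of fun _ _ => (1 : ℝ))

lemma border_mulVec {n : ℕ} (Z : Matrix (Fin n) (Fin n) ℝ) (ζ : Fin n → ℝ)
    (a : Fin n → ℝ) (b : Unit → ℝ) :
    border Z ζ *ᵥ Sum.elim a b =
      Sum.elim (Z *ᵥ a + b () • ζ) (fun _ => ζ ⬝ᵥ a + b ()) := by
  rw [border, fromBlocks_mulVec]
  ext (i | i) <;>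
    simp [Matrix.mulVec, dotProduct, mul_comm]

theorem stmt1 {n : ℕ} (Z : Matrix (Fin n) (Fin n) ℝ) (ζ : Fin n → ℝ)
    (hZ : Z.PosDef) (hB : (border Z ζ).PosDef)
    (w : Fin n → ℝ) (hw : w = Z⁻¹ *ᵥ fun _ => 1) :
    (border Z ζ)⁻¹ *ᵥ (fun _ => 1) =
      Sum.elim w (fun _ => 0) +
        ((1 - ζ ⬝ᵥ w) / (1 - ζ ⬝ᵥ (Z⁻¹ *ᵥ ζ))) •
          Sum.elim (-(Z⁻¹ *ᵥ ζ)) (fun _ => 1) := by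
  set u : Fin n → ℝ := Z⁻¹ *ᵥ ζ with hu
  have hZdet : IsUnit Z.det := hZ.det_pos.ne'.isUnit
  have hBdet : IsUnit (border Z ζ).det := hB.det_pos.ne'.isUnit
  have hZuZ : Z *ᵥ u = ζ := by
    rw [hu, mulVec_mulVec, mul_nonsing_inv _ hZdet, one_mulVec]
  have hZw : Z *ᵥ w = fun _ => 1 := by
    rw [hw, mulVec_mulVec, mul_nonsing_inv _ hZdet, one_mulVec]
  set d : ℝ := 1 - ζ ⬝ᵥ u with hd
  have hdpos : 0 < d := by
    set x : Fin n ⊕ Unit → ℝ := Sum.elim (-u) (fun _ => 1) with hx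
    have hxne : x ≠ 0 := by
      intro h
      have := congrFun h (Sum.inr ())
      simp [hx] at this
    have hBx : (border Z ζ) *ᵥ x = Sum.elim (fun _ => 0) (fun _ => d) := by
      rw [hx, border_mulVec]
      ext (i | i)
      · simp [mulVec_neg, hZuZ]
      · simp [hd]; ring
    have := hB.dotProduct_mulVec_pos hxne
    rw [hBx] at this
    simpa [hx, dotProduct] using this
  set c : ℝ := (1 - ζ ⬝ᵥ w) / d with hc
  set v : Fin n ⊕ Unit → ℝ :=
    Sum.elim w (fun _ => 0) + c • Sum.elim (-u) (fun _ => 1) with hv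
  have hvelim : v = Sum.elim (w + c • (-u)) (fun _ => c) := by
    ext (i | i) <;> simp [hv]
  have hBv : (border Z ζ) *ᵥ v = fun _ => 1 := by
    rw [hvelim, border_mulVec]
    ext (i | i)
    · simp only [Sum.elim_inl, mulVec_add, mulVec_smul, mulVec_neg, hZuZ, hZw]
      simp
    · simp only [Sum.elim_inr]
      have : ζ ⬝ᵥ (w + c • (-u)) = ζ ⬝ᵥ w - c * (ζ ⬝ᵥ u) := by
        simp [dotProduct_add, dotProduct_smul, dotProduct_neg]; ring
      rw [this]
      have hcd : c * d = 1 - ζ ⬝ᵥ w := by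
        rw [hc, div_mul_cancel₀ _ hdpos.ne']
      rw [hd] at hcd
      linarith [hcd]
  calc (border Z ζ)⁻¹ *ᵥ (fun _ => 1)
      = (border Z ζ)⁻¹ *ᵥ ((border Z ζ) *ᵥ v) := by rw [hBv]
    _ = v := by rw [mulVec_mulVec, nonsing_inv_mul _ hBdet, one_mulVec]
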